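/- Let U ∈ B(H) have closed range, Φ a Bessel sequence and Ψ a frame for H. Then the U-cross Gram matrix G_{U,Φ,Ψ} has closed range in ℓ² if and only if U*Φ = {U*φ_i} is a frame sequence (a frame for its closed span). -/

import Mathlib

open ContinuousLinearMap

noncomputable section

/-- ℓ² over a countable index set. -/
abbrev L2 : Type := lp (fun _ : ℕ => ℂ) 2

variable {H : Type} [NormedAddCommGroup H] [InnerProductSpace ℂ H] [CompleteSpace H]

local notation "⟪" x ", " y "⟫" => @inner ℂ _ _ x y

/-- surjectivity of a synthesis operator with lower frame bound -/
lemma surj_of_lower {AΨ : ℝ} (hAΨ : 0 < AΨ) (TΨ : L2 →L[ℂ] H)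
    (hlowΨ : ∀ f : H, AΨ * ‖f‖ ^ 2 ≤ ‖adjoint TΨ f‖ ^ 2) :
    Function.Surjective TΨ := by
  set S : H →L[ℂ] H := TΨ ∘L adjoint TΨ with hS
  have key : ∀ f : H, ⟪adjoint TΨ f, adjoint TΨ f⟫ = ⟪f, S f⟫ := by
    intro f
    rw [hS]
    simp only [coe_comp', Function.comp_apply]
    rw [← adjoint_inner_left TΨ]
  have hnormsq : ∀ f : H, ‖(⟪f, S f⟫ : ℂ)‖ = ‖adjoint TΨ f‖ ^ 2 := by
    intro f
    rw [← key, inner_self_eq_norm_sq_to_K]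
    simp [← Complex.ofReal_pow]
  have hnorm : ∀ f : H, ‖adjoint TΨ f‖ ^ 2 ≤ ‖f‖ * ‖S f‖ := by
    intro f
    have h1 : ‖(⟪f, S f⟫ : ℂ)‖ ≤ ‖f‖ * ‖S f‖ := norm_inner_le_norm _ _
    rw [hnormsq f] at h1
    exact h1
  have hbound : ∀ f : H, ‖f‖ ≤ AΨ⁻¹ * ‖S f‖ := by
    intro f
    have h1 : AΨ * ‖f‖ ^ 2 ≤ ‖f‖ * ‖S f‖ := le_trans (hlowΨ f) (hnorm f)
    rcases eq_or_lt_of_le (norm_nonneg f) with h | h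
    · rw [← h]
      positivity
    · have h2 : AΨ * ‖f‖ ≤ ‖S f‖ := by
        apply le_of_mul_le_mul_right _ h
        calc AΨ * ‖f‖ * ‖f‖ = AΨ * ‖f‖ ^ 2 := by ring
        _ ≤ ‖f‖ * ‖S f‖ := h1
        _ = ‖S f‖ * ‖f‖ := by ring
      have h3 := mul_le_mul_of_nonneg_left h2 (inv_nonneg.2 hAΨ.le)
      rwa [← mul_assoc, inv_mul_cancel₀ hAΨ.ne', one_mul] at h3
  have hanti : AntilipschitzWith ⟨AΨ⁻¹, inv_nonneg.2 hAΨ.le⟩ S :=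
    S.antilipschitz_of_bound hbound
  have hdense : (LinearMap.range (S : H →ₗ[ℂ] H)).topologicalClosure = ⊤ := by
    rw [Submodule.topologicalClosure_eq_top_iff]
    rw [Submodule.eq_bot_iff]
    intro g hg
    have h0 : (⟪S g, g⟫ : ℂ) = 0 :=
      (Submodule.mem_orthogonal _ g).1 hg (S g) (LinearMap.mem_range_self _ g)
    have h1 : (⟪g, S g⟫ : ℂ) = 0 := by
      rw [← inner_conj_symm, h0, map_zero]
    have h2 : adjoint TΨ g = 0 := by
      rw [← inner_self_eq_zero (𝕜 := ℂ), key, h1]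
    have h3 := hlowΨ g
    rw [h2, norm_zero] at h3
    have : ‖g‖ ^ 2 ≤ 0 := by nlinarith
    have : ‖g‖ = 0 := by nlinarith [sq_nonneg ‖g‖, norm_nonneg g]
    exact norm_eq_zero.mp this
  have hbij : Function.Bijective S :=
    (S.bijective_iff_dense_range_and_antilipschitz).2 ⟨hdense, ⟨_, hanti⟩⟩
  intro y
  obtain ⟨x, hx⟩ := hbij.2 y
  exact ⟨adjoint TΨ x, hx⟩

set_option maxHeartbeats 1000000 in
/-- for `U` with closed range, `Φ` Bessel and `Ψ` a frame for `H`,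
the Gram matrix `G_{U,Φ,Ψ}` has closed range in ℓ² iff `U*Φ` is a frame sequence
(a frame for the closure of its span). -/
theorem stmt_16
    {H : Type} [NormedAddCommGroup H] [InnerProductSpace ℂ H] [CompleteSpace H]
    (Φ Ψ : ℕ → H) (AΨ : ℝ) (hAΨ : 0 < AΨ)
    (TΦ TΨ : L2 →L[ℂ] H)
    (hΦ : ∀ i, TΦ (lp.single 2 i 1) = Φ i)
    (hΨ : ∀ i, TΨ (lp.single 2 i 1) = Ψ i)
    (hlowΨ : ∀ f : H, AΨ * ‖f‖ ^ 2 ≤ ‖adjoint TΨ f‖ ^ 2)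
    (U : H →L[ℂ] H)
    (hclosed : IsClosed (LinearMap.range (U : H →ₗ[ℂ] H) : Set H)) :
    IsClosed (LinearMap.range (adjoint TΦ ∘L U ∘L TΨ : L2 →ₗ[ℂ] L2) : Set L2) ↔
      ∃ A > (0 : ℝ), ∃ B > (0 : ℝ),
        ∀ f ∈ (Submodule.span ℂ
            (Set.range fun i => adjoint U (Φ i))).topologicalClosure,
          A * ‖f‖ ^ 2 ≤ ‖adjoint (adjoint U ∘L TΦ) f‖ ^ 2 ∧
            ‖adjoint (adjoint U ∘L TΦ) f‖ ^ 2 ≤ B * ‖f‖ ^ 2 := by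
  classical
  set D : H →L[ℂ] L2 := adjoint TΦ ∘L U with hD
  have hadj : adjoint (adjoint U ∘L TΦ) = D := by
    rw [adjoint_comp, adjoint_adjoint]
  set Sp : Submodule ℂ H := Submodule.span ℂ (Set.range fun i => adjoint U (Φ i)) with hSp
  set M : Submodule ℂ H := Sp.topologicalClosure with hM
  -- coordinates of D f
  have hcoord : ∀ (f : H) (i : ℕ), (D f : ∀ _ : ℕ, ℂ) i = ⟪adjoint U (Φ i), f⟫ := by
    intro f i
    have h1 : (⟪lp.single 2 i (1 : ℂ), D f⟫ : ℂ) = (D f : ∀ _ : ℕ, ℂ) i := by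
      rw [lp.inner_single_left]
      simp [RCLike.inner_apply]
    rw [← h1, hD]
    simp only [coe_comp', Function.comp_apply]
    rw [adjoint_inner_right, hΦ i, ← adjoint_inner_left U]
  -- kernel of D
  have horth : Mᗮ = Spᗮ := by
    rw [hM, ← Submodule.orthogonal_orthogonal_eq_closure,
      Submodule.triorthogonal_eq_orthogonal]
  have hker : LinearMap.ker (D : H →ₗ[ℂ] L2) = Mᗮ := by
    ext f
    rw [LinearMap.mem_ker, horth]
    constructor
    · intro h
      rw [Submodule.mem_orthogonal]
      intro u hu
      induction hu using Submodule.span_induction with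
      | mem x hx =>
        obtain ⟨i, rfl⟩ := hx
        rw [← hcoord f i, show D f = 0 from h]
        rfl
      | zero => simp
      | add x y _ _ hx hy => rw [inner_add_left, hx, hy, add_zero]
      | smul a x _ hx => rw [inner_smul_left, hx, mul_zero]
    · intro h
      apply lp.ext
      funext i
      have := (Submodule.mem_orthogonal _ f).1 h (adjoint U (Φ i))
        (Submodule.subset_span ⟨i, rfl⟩)
      show (D f : ∀ _ : ℕ, ℂ) i = 0
      rw [hcoord f i, this]
  -- completeness / projections
  haveI hMcomplete : CompleteSpace M := (Submodule.isClosed_topologicalClosure Sp).completeSpace_coe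
  -- the restricted operator
  set DM : M →L[ℂ] L2 := D ∘L M.subtypeL with hDM
  have hDMapp : ∀ m : M, DM m = D (m : H) := by intro m; rfl
  have hrangeDM : Set.range DM = (LinearMap.range (D : H →ₗ[ℂ] L2) : Set L2) := by
    ext y
    constructor
    · rintro ⟨m, rfl⟩
      exact ⟨(m : H), rfl⟩
    · rintro ⟨f, rfl⟩
      refine ⟨⟨M.orthogonalProjection f, (M.orthogonalProjection f).2⟩, ?_⟩
      rw [hDMapp]
      have hsub : f - M.orthogonalProjection f ∈ LinearMap.ker (D : H →ₗ[ℂ] L2) := by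
        rw [hker]; exact Submodule.sub_starProjection_mem_orthogonal (K := M) f
      have : D (f - M.orthogonalProjection f) = 0 := hsub
      rw [map_sub] at this
      simpa using (sub_eq_zero.mp this).symm
  -- range of the Gram operator
  have hsurjΨ : Function.Surjective TΨ := surj_of_lower hAΨ TΨ hlowΨ
  have hrangeG : (LinearMap.range (adjoint TΦ ∘L U ∘L TΨ : L2 →ₗ[ℂ] L2) : Set L2)
      = (LinearMap.range (D : H →ₗ[ℂ] L2) : Set L2) := by
    ext y
    simp only [SetLike.mem_coe, LinearMap.mem_range]
    constructor
    · rintro ⟨x, rfl⟩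
      exact ⟨TΨ x, rfl⟩
    · rintro ⟨f, rfl⟩
      obtain ⟨x, hx⟩ := hsurjΨ f
      exact ⟨x, by simp [hD, hx]⟩
  rw [show (LinearMap.range (adjoint TΦ ∘L U ∘L TΨ : L2 →ₗ[ℂ] L2) : Set L2)
      = (LinearMap.range (D : H →ₗ[ℂ] L2) : Set L2) from hrangeG, hadj]
  have hupper : ∀ f : H, ‖D f‖ ^ 2 ≤ (‖D‖ ^ 2 + 1) * ‖f‖ ^ 2 := by
    intro f
    have h1 := D.le_opNorm f
    nlinarith [norm_nonneg f, norm_nonneg (D f), norm_nonneg D]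
  constructor
  · intro hcl
    haveI : CompleteSpace (LinearMap.range (D : H →ₗ[ℂ] L2)) := hcl.completeSpace_coe
    set DM' : M →L[ℂ] LinearMap.range (D : H →ₗ[ℂ] L2) :=
      DM.codRestrict (LinearMap.range (D : H →ₗ[ℂ] L2)) (fun m => ⟨(m : H), rfl⟩) with hDM'
    have hbij : Function.Bijective DM' := by
      constructor
      · intro a b hab
        have hDab : D ((a : H) - (b : H)) = 0 := by
          have : DM a = DM b := congrArg Subtype.val hab
          rw [map_sub, hDMapp a, hDMapp b] at *
          rw [this, sub_self]
        have hmem : ((a : H) - (b : H)) ∈ Mᗮ := by rw [← hker]; exact hDab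
        have hmem2 : ((a : H) - (b : H)) ∈ M := M.sub_mem a.2 b.2
        have : ((a : H) - (b : H)) = 0 := by
          have := (Submodule.mem_orthogonal _ _).1 hmem _ hmem2
          exact inner_self_eq_zero.mp this
        exact Subtype.ext (sub_eq_zero.mp this)
      · rintro ⟨y, hy⟩
        have : y ∈ Set.range DM := by rw [hrangeDM]; exact hy
        obtain ⟨m, hm⟩ := this
        exact ⟨m, Subtype.ext hm⟩
    obtain ⟨c, hc⟩ := ((DM'.bijective_iff_dense_range_and_antilipschitz).1 hbij).2
    have hb : ∀ m : M, ‖(m : H)‖ ≤ ((c : ℝ) + 1) * ‖D (m : H)‖ := by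
      intro m
      have h1 : dist m 0 ≤ (c : ℝ) * dist (DM' m) (DM' 0) := hc.le_mul_dist m 0
      rw [map_zero] at h1
      simp only [dist_zero_right] at h1
      have h2 : ‖DM' m‖ = ‖D (m : H)‖ := rfl
      have h3 : ‖m‖ = ‖(m : H)‖ := rfl
      rw [h2, h3] at h1
      nlinarith [norm_nonneg (D (m : H))]
    refine ⟨(((c : ℝ) + 1) ^ 2)⁻¹, by positivity, ‖D‖ ^ 2 + 1, by positivity, ?_⟩
    intro f hf
    refine ⟨?_, hupper f⟩
    have h1 := hb ⟨f, hf⟩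
    simp only at h1
    have h2 : ‖f‖ ^ 2 ≤ ((c : ℝ) + 1) ^ 2 * ‖D f‖ ^ 2 := by
      nlinarith [norm_nonneg f, norm_nonneg (D f), c.coe_nonneg]
    calc (((c : ℝ) + 1) ^ 2)⁻¹ * ‖f‖ ^ 2
        ≤ (((c : ℝ) + 1) ^ 2)⁻¹ * (((c : ℝ) + 1) ^ 2 * ‖D f‖ ^ 2) :=
          mul_le_mul_of_nonneg_left h2 (by positivity)
      _ = ‖D f‖ ^ 2 := by
          rw [← mul_assoc, inv_mul_cancel₀ (by positivity), one_mul]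
  · rintro ⟨A, hA, B, hB, hfr⟩
    have hsA : 0 < Real.sqrt A := Real.sqrt_pos.2 hA
    have hb : ∀ m : M, ‖m‖ ≤ (Real.sqrt A)⁻¹ * ‖DM m‖ := by
      intro m
      have h1 : (Real.sqrt A * ‖(m : H)‖) ^ 2 ≤ ‖D (m : H)‖ ^ 2 := by
        rw [mul_pow, Real.sq_sqrt hA.le]
        exact (hfr (m : H) m.2).1
      have h2 := Real.sqrt_le_sqrt h1
      rw [Real.sqrt_sq (by positivity), Real.sqrt_sq (norm_nonneg _)] at h2
      have h3 := mul_le_mul_of_nonneg_left h2 (inv_nonneg.2 hsA.le)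
      rw [← mul_assoc, inv_mul_cancel₀ hsA.ne', one_mul] at h3
      exact h3
    have hanti : AntilipschitzWith ((Real.sqrt A)⁻¹.toNNReal) DM := by
      apply DM.antilipschitz_of_bound
      intro m
      rw [Real.coe_toNNReal _ (by positivity)]
      exact hb m
    have hclosed' : IsClosed (Set.range DM) :=
      hanti.isClosed_range DM.uniformContinuous
    rw [← hrangeDM]
    exact hclosed'
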